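/- Let G be a bipartite graph with parts X and Y, τ a threshold assignment, and S_0,…,S_k a timed target set with induced positive-set sequence Q_0,…,Q_k. Let S_e=S_0∪S_2∪… and S_o=S_1∪S_3∪…. If D⊆V satisfies D∩S_e∩X=∅ and D∩S_o∩Y=∅, and if d_D(u)>d(u)−τ(u) for every u∈D, then D=∅. -/
import Mathlib


open Finset
open scoped Classical

variable {V : Type*}

noncomputable def Qseq (G : SimpleGraph V) [Fintype V] (τ : V → ℕ) (S : ℕ → Finset V) :
    ℕ → Finset V
  | 0 => ∅
  | i + 1 => Finset.univ.filter fun v =>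
      τ v ≤ (G.neighborFinset v ∩ (S i ∪ Qseq G τ S i)).card

def IsTTS (G : SimpleGraph V) [Fintype V] (τ : V → ℕ) (S : ℕ → Finset V) (k : ℕ) : Prop :=
  S k = ∅ ∧ Qseq G τ S k = Finset.univ

def ttsSize (S : ℕ → Finset V) (k : ℕ) : ℕ := ∑ i ∈ Finset.range (k + 1), (S i).card

noncomputable def strictMaj (G : SimpleGraph V) [Fintype V] (v : V) : ℕ := (G.degree v + 2) / 2

noncomputable def npStep (G : SimpleGraph V) [Fintype V] (τ : V → ℕ) (A : Finset V) : Finset V :=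
  Finset.univ.filter fun v => τ v ≤ (G.neighborFinset v ∩ A).card

def IsTS (G : SimpleGraph V) [Fintype V] (τ : V → ℕ) (S : Finset V) : Prop :=
  ∃ i : ℕ, (npStep G τ)^[i] S = Finset.univ

noncomputable def MTT (G : SimpleGraph V) [Fintype V] (τ : V → ℕ) : ℕ :=
  sInf {m | ∃ (S : ℕ → Finset V) (k : ℕ), IsTTS G τ S k ∧ ttsSize S k = m}

/-- Claim 1 in Lemma 2: Let `G` be bipartite with parts `X`, `Y`, `τ` a
threshold assignment, and `S_0, …, S_k` a timed target set. With `S_e = S_0 ∪ S_2 ∪ …`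
and `S_o = S_1 ∪ S_3 ∪ …`, if `D ⊆ V` satisfies `D ∩ S_e ∩ X = ∅` and `D ∩ S_o ∩ Y = ∅`,
and `d_D(u) > d(u) − τ(u)` for every `u ∈ D`, then `D = ∅`. -/
theorem stmt2 [Fintype V] (G : SimpleGraph V) (X Y : Finset V)
    (hpart : ∀ v, v ∈ X ↔ v ∉ Y)
    (hbip : ∀ a b, G.Adj a b → (a ∈ X ↔ b ∈ Y))
    (τ : V → ℕ) (hτ : ∀ v, τ v ≤ G.degree v)
    (S : ℕ → Finset V) (k : ℕ) (hS : IsTTS G τ S k)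
    (D : Finset V)
    (hDX : D ∩ (((Finset.range (k + 1)).filter fun i => Even i).biUnion S) ∩ X = ∅)
    (hDY : D ∩ (((Finset.range (k + 1)).filter fun i => Odd i).biUnion S) ∩ Y = ∅)
    (hdeg : ∀ u ∈ D, G.degree u - τ u < (G.neighborFinset u ∩ D).card) :
    D = ∅ := by
  obtain ⟨hSk, hQk⟩ := hS
  have key : ∀ t ≤ k + 1, ∀ u ∈ D, u ∈ Qseq G τ S t → (u ∈ X ↔ Odd t) := by
    intro t
    induction t with
    | zero => intro _ u _ hq; simp [Qseq] at hq
    | succ t ih =>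
      intro ht u hu hq
      have hτu : τ u ≤ (G.neighborFinset u ∩ (S t ∪ Qseq G τ S t)).card := by
        simpa [Qseq] using hq
      have hex : ∃ w ∈ G.neighborFinset u ∩ (S t ∪ Qseq G τ S t), w ∈ D := by
        by_contra h
        push_neg at h
        have hsub : G.neighborFinset u ∩ (S t ∪ Qseq G τ S t) ⊆ G.neighborFinset u \ D := by
          intro w hw
          exact Finset.mem_sdiff.mpr ⟨(Finset.mem_inter.mp hw).1, fun hwD => h w hw hwD⟩
        have h1 : τ u ≤ (G.neighborFinset u \ D).card :=
          le_trans hτu (Finset.card_le_card hsub)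
        have h2 : (G.neighborFinset u \ D).card + (G.neighborFinset u ∩ D).card
            = G.degree u := by
          rw [Finset.card_sdiff_add_card_inter, G.card_neighborFinset_eq_degree]
        have h3 := hdeg u hu
        have h4 := hτ u
        omega
      obtain ⟨w, hw, hwD⟩ := hex
      have hadj : G.Adj u w := by
        have := (Finset.mem_inter.mp hw).1
        simpa using this
      have hwmem := (Finset.mem_inter.mp hw).2
      rw [Finset.mem_union] at hwmem
      have hw_side : w ∈ X ↔ Odd t := by
        rcases hwmem with hwS | hwQ
        · have htk : t ≤ k := by omega
          rcases Nat.even_or_odd t with he | ho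
          · constructor
            · intro hwX
              have : w ∈ D ∩ (((Finset.range (k + 1)).filter fun i => Even i).biUnion S) ∩ X := by
                simp only [Finset.mem_inter, Finset.mem_biUnion, Finset.mem_filter,
                  Finset.mem_range]
                exact ⟨⟨hwD, ⟨t, ⟨by omega, he⟩, hwS⟩⟩, hwX⟩
              rw [hDX] at this
              exact absurd this (Finset.notMem_empty w)
            · intro ho'; exact absurd ho' (Nat.not_odd_iff_even.mpr he)
          · constructor
            · intro _; exact ho
            · intro _
              by_contra hwX
              have hwY : w ∈ Y := by
                by_contra hwY; exact hwX ((hpart w).mpr hwY)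
              have : w ∈ D ∩ (((Finset.range (k + 1)).filter fun i => Odd i).biUnion S) ∩ Y := by
                simp only [Finset.mem_inter, Finset.mem_biUnion, Finset.mem_filter,
                  Finset.mem_range]
                exact ⟨⟨hwD, ⟨t, ⟨by omega, ho⟩, hwS⟩⟩, hwY⟩
              rw [hDY] at this
              exact absurd this (Finset.notMem_empty w)
        · exact ih (by omega) w hwD hwQ
      have huw : u ∈ X ↔ w ∈ Y := hbip u w hadj
      have hwXY : w ∈ X ↔ w ∉ Y := hpart w
      have hodd : Odd (t + 1) ↔ ¬ Odd t := by
        rw [Nat.odd_add_one]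
      by_cases hwX : w ∈ X
      · have : Odd t := hw_side.mp hwX
        have : ¬ Odd (t + 1) := by simp [hodd, this]
        have huX : u ∉ X := fun huX => (hwXY.mp hwX) (huw.mp huX)
        simp [huX, this]
      · have hot : ¬ Odd t := fun h => hwX (hw_side.mpr h)
        have hwY : w ∈ Y := by
          by_contra hwY; exact hwX ((hpart w).mpr hwY)
        have huX : u ∈ X := huw.mpr hwY
        simp [huX, hodd, hot]
  -- now conclude
  by_contra hD
  obtain ⟨u, hu⟩ := Finset.nonempty_iff_ne_empty.mpr hD
  have huk : u ∈ Qseq G τ S k := by rw [hQk]; exact Finset.mem_univ u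
  have huk1 : u ∈ Qseq G τ S (k + 1) := by
    simp only [Qseq, Finset.mem_filter, Finset.mem_univ, true_and]
    rw [hSk, hQk]
    simpa [G.card_neighborFinset_eq_degree] using hτ u
  have h1 := key k (by omega) u hu huk
  have h2 := key (k + 1) le_rfl u hu huk1
  rcases Nat.even_or_odd k with he | ho
  · have : u ∉ X := fun h => (Nat.not_odd_iff_even.mpr he) (h1.mp h)
    exact this (h2.mpr (by simpa [Nat.odd_add_one] using he))
  · have : ¬ Odd (k + 1) := by simp [Nat.odd_add_one, Nat.not_even_iff_odd.mpr ho]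
    exact this (h2.mp (h1.mpr ho))
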